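/- Suppose ∫₀^∞ w(t)^{1/(1-p)} dt = ∞. Let v : [0,∞) → ℝ and let g be locally integrable on [0,∞) with v(x₁) − v(x₀) = ∫_{x₀}^{x₁} g(t) dt for all 0 ≤ x₀ ≤ x₁, and assume the finite-energy condition ∫₀^∞ |g(t)|^p w(t) dt < ∞. Then lim_{x → ∞} |v(x)| / u(x)^{1−1/p} = 0, where u(x) = ∫₀ˣ w(t)^{1/(1-p)} dt. -/

import Mathlib

open MeasureTheory Set Filter

/-- If `∫₀^∞ w^{1/(1-p)} dt = ∞`, then every locally
absolutely continuous function `v` on `[0,∞)` (with derivative `g`) of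
finite `p`-energy satisfies `lim_{x→∞} |v(x)| / u(x)^{1-1/p} = 0`, where
`u(x) = ∫₀ˣ w(t)^{1/(1-p)} dt`. -/
theorem stmt_4 (p : ℝ) (hp : 1 < p) (w : ℝ → ℝ)
    (hw_meas : Measurable w)
    (hw_pos : ∀ᵐ t ∂(volume : Measure ℝ), 0 < w t)
    (hloc : LocallyIntegrableOn (fun t => w t ^ (1 / (1 - p))) (Ici (0 : ℝ)))
    (hw_inf : (∫⁻ t in Ioi (0 : ℝ), ENNReal.ofReal (w t ^ (1 / (1 - p)))) = ⊤)
    (u : ℝ → ℝ)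
    (hu : ∀ x : ℝ, u x = ∫ t in Ioc (0 : ℝ) x, w t ^ (1 / (1 - p)))
    (hu_pos : ∀ x : ℝ, 0 < x → 0 < u x)
    (hu_mono : ∀ x₀ x₁ : ℝ, 0 ≤ x₀ → x₀ ≤ x₁ → u x₀ ≤ u x₁)
    (v g : ℝ → ℝ) (hg_meas : Measurable g)
    (hg_loc : LocallyIntegrableOn g (Ici (0 : ℝ)))
    (hftc : ∀ x₀ x₁ : ℝ, 0 ≤ x₀ → x₀ ≤ x₁ →
      v x₁ - v x₀ = ∫ t in Ioc x₀ x₁, g t)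
    (henergy : (∫⁻ t in Ioi (0 : ℝ), ENNReal.ofReal (|g t| ^ p * w t)) < ⊤) :
    Tendsto (fun x => |v x| / (u x) ^ (1 - 1 / p)) atTop (nhds 0) := by
  have hp0 : (0:ℝ) < p := lt_trans zero_lt_one hp
  set q : ℝ := p / (p - 1) with hqdef
  have hpq : p.HolderConjugate q := Real.HolderConjugate.conjExponent hp
  have hq0 : (0:ℝ) < q := hpq.symm.pos
  have hq_eq : 1 - 1 / p = 1 / q := by
    have := hpq.inv_add_inv_eq_one
    rw [one_div, one_div]
    linarith
  -- key exponent identities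
  have hexp1 : -(1/p) * q = 1 / (1 - p) := by
    have h1 : p - 1 ≠ 0 := by linarith
    have h2 : (1:ℝ) - p ≠ 0 := by linarith
    rw [hqdef]
    field_simp
    ring
  -- measurable ENNReal densities
  set h : ℝ → ENNReal := fun t => ENNReal.ofReal (|g t| ^ p * w t) with hh
  set k : ℝ → ENNReal := fun t => ENNReal.ofReal (w t ^ (1 / (1 - p))) with hk
  have hh_meas : Measurable h := by
    apply Measurable.ennreal_ofReal; fun_prop
  have hk_meas : Measurable k := by
    apply Measurable.ennreal_ofReal; fun_prop
  set E : ℝ → ENNReal := fun a => ∫⁻ t in Ioi a, h t with hE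
  -- u is nonnegative on [0, ∞)
  have hu_nonneg : ∀ x : ℝ, 0 ≤ x → 0 ≤ u x := by
    intro x hx
    rcases eq_or_lt_of_le hx with hx0 | hx0
    · rw [← hx0, hu]; simp
    · exact (hu_pos x hx0).le
  -- integrability of w^{1/(1-p)} on Ioc 0 x
  have hint : ∀ x : ℝ, 0 ≤ x →
      IntegrableOn (fun t => w t ^ (1 / (1 - p))) (Ioc 0 x) volume := by
    intro x hx
    exact (hloc.integrableOn_compact_subset
      Icc_subset_Ici_self isCompact_Icc).mono_set
      Ioc_subset_Icc_self
  have hk_nonneg : ∀ᵐ t ∂(volume : Measure ℝ), 0 ≤ w t ^ (1 / (1 - p)) := by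
    filter_upwards [hw_pos] with t ht
    exact (Real.rpow_pos_of_pos ht _).le
  -- ∫⁻ over Ioc 0 x of k equals ofReal (u x)
  have hkint : ∀ x : ℝ, 0 ≤ x →
      (∫⁻ t in Ioc (0:ℝ) x, k t) = ENNReal.ofReal (u x) := by
    intro x hx
    rw [hu, ofReal_integral_eq_lintegral_ofReal (hint x hx)
      (ae_restrict_of_ae hk_nonneg)]
  -- Hölder inequality on Ioc a x
  have holder : ∀ a x : ℝ,
      (∫⁻ t in Ioc a x, ENNReal.ofReal |g t|) ≤
        (∫⁻ t in Ioc a x, h t) ^ (1/p) * (∫⁻ t in Ioc a x, k t) ^ (1/q) := by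
    intro a x
    set F : ℝ → ENNReal := fun t => ENNReal.ofReal (|g t| * w t ^ (1/p)) with hF
    set G : ℝ → ENNReal := fun t => ENNReal.ofReal (w t ^ (-(1/p))) with hG
    have hF_meas : AEMeasurable F (volume.restrict (Ioc a x)) := by
      apply Measurable.aemeasurable; apply Measurable.ennreal_ofReal; fun_prop
    have hG_meas : AEMeasurable G (volume.restrict (Ioc a x)) := by
      apply Measurable.aemeasurable; apply Measurable.ennreal_ofReal; fun_prop
    have hae := ae_restrict_of_ae (μ := (volume : Measure ℝ)) (s := Ioc a x) hw_pos
    have h1 : (∫⁻ t in Ioc a x, ENNReal.ofReal |g t|)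
        = ∫⁻ t in Ioc a x, (F * G) t := by
      refine lintegral_congr_ae ?_
      filter_upwards [hae] with t ht
      simp only [Pi.mul_apply, hF, hG]
      rw [← ENNReal.ofReal_mul (by positivity), mul_assoc,
        ← Real.rpow_add ht]
      norm_num
    have h2 : (∫⁻ t in Ioc a x, F t ^ p) = ∫⁻ t in Ioc a x, h t := by
      refine lintegral_congr_ae ?_
      filter_upwards [hae] with t ht
      rw [hF, ENNReal.ofReal_rpow_of_nonneg (by positivity) hp0.le, hh]
      congr 1
      rw [Real.mul_rpow (abs_nonneg _) (Real.rpow_pos_of_pos ht _).le,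
        ← Real.rpow_mul ht.le, one_div, inv_mul_cancel₀ hp0.ne', Real.rpow_one]
    have h3 : (∫⁻ t in Ioc a x, G t ^ q) = ∫⁻ t in Ioc a x, k t := by
      refine lintegral_congr_ae ?_
      filter_upwards [hae] with t ht
      rw [hG, ENNReal.ofReal_rpow_of_nonneg (Real.rpow_pos_of_pos ht _).le hq0.le,
        hk, ← Real.rpow_mul ht.le, hexp1]
    rw [h1, ← h2, ← h3]
    exact ENNReal.lintegral_mul_le_Lp_mul_Lq _ hpq hF_meas hG_meas
  -- total energy over Ioi 0 is finite
  have hE_fin : ∀ a : ℝ, 0 ≤ a → E a ≠ ⊤ := by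
    intro a ha
    exact ne_top_of_le_ne_top henergy.ne (lintegral_mono_set (Ioi_subset_Ioi ha))
  -- master bound in ENNReal
  have master : ∀ a x : ℝ, 0 ≤ a → a ≤ x →
      ENNReal.ofReal |v x| ≤ ENNReal.ofReal |v a|
        + (E a) ^ (1/p) * (ENNReal.ofReal (u x)) ^ (1/q) := by
    intro a x ha hax
    have htri : |v x| ≤ |v a| + |v x - v a| := by
      have := abs_add_le (v a) (v x - v a)
      simpa using this
    refine le_trans (ENNReal.ofReal_le_ofReal htri) ?_
    refine le_trans (ENNReal.ofReal_add_le) (add_le_add le_rfl ?_)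
    have hstep : ENNReal.ofReal |v x - v a| ≤ ∫⁻ t in Ioc a x, ENNReal.ofReal |g t| := by
      rw [hftc a x ha hax]
      calc ENNReal.ofReal |∫ t in Ioc a x, g t|
          = ↑‖∫ t in Ioc a x, g t‖₊ := by
            rw [← enorm_eq_nnnorm, ← ofReal_norm, Real.norm_eq_abs]
        _ ≤ ∫⁻ t in Ioc a x, ↑‖g t‖₊ :=
            enorm_integral_le_lintegral_enorm _
        _ = ∫⁻ t in Ioc a x, ENNReal.ofReal |g t| := by
            simp_rw [← enorm_eq_nnnorm, ← ofReal_norm, Real.norm_eq_abs]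
    refine le_trans hstep (le_trans (holder a x) ?_)
    have g1 : (∫⁻ t in Ioc a x, h t) ≤ E a := lintegral_mono_set Ioc_subset_Ioi_self
    have g2 : (∫⁻ t in Ioc a x, k t) ≤ ENNReal.ofReal (u x) := by
      rw [← hkint x (ha.trans hax)]
      exact lintegral_mono_set (Ioc_subset_Ioc_left ha)
    exact mul_le_mul' (ENNReal.rpow_le_rpow g1 (by positivity))
      (ENNReal.rpow_le_rpow g2 (by positivity))
  -- real form of the master bound
  have masterR : ∀ a x : ℝ, 0 ≤ a → a ≤ x →
      |v x| ≤ |v a| + ((E a) ^ (1/p)).toReal * u x ^ (1/q) := by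
    intro a x ha hax
    have hux : 0 ≤ u x := hu_nonneg x (ha.trans hax)
    have hfin : ENNReal.ofReal |v a|
        + (E a) ^ (1/p) * (ENNReal.ofReal (u x)) ^ (1/q) ≠ ⊤ := by
      refine ENNReal.add_ne_top.mpr ⟨ENNReal.ofReal_ne_top, ?_⟩
      exact ENNReal.mul_ne_top
        (ENNReal.rpow_ne_top_of_nonneg (by positivity) (hE_fin a ha))
        (ENNReal.rpow_ne_top_of_nonneg (by positivity) ENNReal.ofReal_ne_top)
    have := ENNReal.toReal_mono hfin (master a x ha hax)
    rw [ENNReal.toReal_ofReal (abs_nonneg _)] at this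
    refine le_trans this (le_of_eq ?_)
    rw [ENNReal.toReal_add ENNReal.ofReal_ne_top
        (ENNReal.mul_ne_top
          (ENNReal.rpow_ne_top_of_nonneg (by positivity) (hE_fin a ha))
          (ENNReal.rpow_ne_top_of_nonneg (by positivity) ENNReal.ofReal_ne_top)),
      ENNReal.toReal_ofReal (abs_nonneg _), ENNReal.toReal_mul,
      ENNReal.ofReal_rpow_of_nonneg hux (by positivity),
      ENNReal.toReal_ofReal (Real.rpow_nonneg hux _)]
  -- u tends to infinity
  have hu_top : Tendsto u atTop atTop := by
    have hex : ∀ M : ℝ, ∃ x : ℝ, 0 ≤ x ∧ M ≤ u x := by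
      intro M
      by_contra hcon
      push_neg at hcon
      set ν : Measure ℝ := volume.withDensity k with hν
      have hνs : ∀ s : Set ℝ, MeasurableSet s → ν s = ∫⁻ t in s, k t :=
        fun s hs => withDensity_apply k hs
      have hmono : Monotone (fun n : ℕ => Ioc (0:ℝ) n) := by
        intro m n hmn
        exact Ioc_subset_Ioc le_rfl (by exact_mod_cast hmn)
      have hun : (⋃ n : ℕ, Ioc (0:ℝ) n) = Ioi 0 := by
        ext t
        simp only [mem_iUnion, mem_Ioc, mem_Ioi]
        constructor
        · rintro ⟨n, ht, -⟩; exact ht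
        · intro ht
          obtain ⟨n, hn⟩ := exists_nat_ge t
          exact ⟨n, ht, hn⟩
      have htend := tendsto_measure_iUnion_atTop (μ := ν)
        (s := fun n : ℕ => Ioc (0:ℝ) n) hmono
      rw [hun, hνs _ measurableSet_Ioi, hw_inf] at htend
      have hle : ∀ n : ℕ, ν (Ioc (0:ℝ) n) ≤ ENNReal.ofReal M := by
        intro n
        rw [hνs _ measurableSet_Ioc, hkint n (Nat.cast_nonneg n)]
        exact ENNReal.ofReal_le_ofReal (hcon n (Nat.cast_nonneg n)).le
      have : (⊤ : ENNReal) ≤ ENNReal.ofReal M := le_of_tendsto' htend hle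
      exact ENNReal.ofReal_ne_top (top_le_iff.mp this)
    rw [tendsto_atTop]
    intro M
    obtain ⟨x₀, hx₀, hMx₀⟩ := hex M
    filter_upwards [eventually_ge_atTop x₀] with x hx
    exact hMx₀.trans (hu_mono x₀ x hx₀ hx)
  -- the energy tail tends to 0 : for every δ ≠ 0 there is a ≥ 0 with E a < δ
  have htail : ∀ δ : ENNReal, 0 < δ → ∃ a : ℝ, 0 ≤ a ∧ E a < δ := by
    intro δ hδ
    set ν : Measure ℝ := (volume.restrict (Ioi (0:ℝ))).withDensity h with hν
    have hνa : ∀ a : ℝ, 0 ≤ a → ν (Ioi a) = E a := by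
      intro a ha
      rw [hν, withDensity_apply h measurableSet_Ioi,
        Measure.restrict_restrict measurableSet_Ioi, Ioi_inter_Ioi,
        max_eq_left ha]
    have hanti : Antitone (fun n : ℕ => Ioi (n:ℝ)) := by
      intro m n hmn
      exact Ioi_subset_Ioi (by exact_mod_cast hmn)
    have hiInter : (⋂ n : ℕ, Ioi (n:ℝ)) = ∅ := by
      ext t
      simp only [mem_iInter, mem_Ioi, mem_empty_iff_false, iff_false, not_forall,
        not_lt]
      obtain ⟨n, hn⟩ := exists_nat_ge t
      exact ⟨n, hn⟩
    have htend := tendsto_measure_iInter_atTop (μ := ν)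
      (s := fun n : ℕ => Ioi (n:ℝ))
      (fun n => measurableSet_Ioi.nullMeasurableSet) hanti
      ⟨0, by simp only [Nat.cast_zero]
             rw [hνa 0 le_rfl]
             exact hE_fin 0 le_rfl⟩
    rw [hiInter, measure_empty] at htend
    have := htend.eventually_lt_const hδ
    obtain ⟨n, hn⟩ := this.exists
    exact ⟨n, Nat.cast_nonneg n, by rw [← hνa n (Nat.cast_nonneg n)]; exact hn⟩
  -- final epsilon argument
  rw [show (1 - 1/p) = 1/q from hq_eq]
  rw [NormedAddCommGroup.tendsto_nhds_zero]
  intro ε hε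
  have hδ : (0:ENNReal) < ENNReal.ofReal (ε/2) ^ p :=
    ENNReal.rpow_pos (ENNReal.ofReal_pos.mpr (by linarith)) ENNReal.ofReal_ne_top
  obtain ⟨a, ha, hEa⟩ := htail _ hδ
  have hCa : ((E a) ^ (1/p)).toReal ≤ ε/2 := by
    have h1 : (E a) ^ (1/p) ≤ ENNReal.ofReal (ε/2) := by
      calc (E a) ^ (1/p) ≤ (ENNReal.ofReal (ε/2) ^ p) ^ (1/p) := by
            exact ENNReal.rpow_le_rpow hEa.le (by positivity)
        _ = ENNReal.ofReal (ε/2) := by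
            rw [← ENNReal.rpow_mul, mul_one_div, div_self hp0.ne', ENNReal.rpow_one]
    calc ((E a) ^ (1/p)).toReal ≤ (ENNReal.ofReal (ε/2)).toReal :=
          ENNReal.toReal_mono ENNReal.ofReal_ne_top h1
      _ = ε/2 := ENNReal.toReal_ofReal (by linarith)
  -- |v a| / u x ^ (1/q) → 0
  have hdiv : Tendsto (fun x => |v a| / u x ^ (1/q)) atTop (nhds 0) := by
    apply Filter.Tendsto.const_div_atTop
    exact (tendsto_rpow_atTop (by positivity)).comp hu_top
  have hev := hdiv.eventually_lt_const (show (0:ℝ) < ε/2 by linarith)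
  filter_upwards [hev, eventually_ge_atTop a, eventually_ge_atTop (max a 1)]
    with x hx1 hx2 hx3
  have hx1' : (1:ℝ) ≤ x := le_trans (le_max_right a 1) hx3
  have hupos : 0 < u x ^ (1/q) :=
    Real.rpow_pos_of_pos (hu_pos x (by linarith)) _
  have hxa : |v x| / u x ^ (1/q) ≤ |v a| / u x ^ (1/q) + ((E a) ^ (1/p)).toReal := by
    rw [div_add' _ _ _ hupos.ne']
    gcongr
    exact masterR a x ha hx2
  have hnn : 0 ≤ |v x| / u x ^ (1/q) := div_nonneg (abs_nonneg _) hupos.le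
  rw [Real.norm_eq_abs, abs_of_nonneg hnn]
  calc |v x| / u x ^ (1/q) ≤ |v a| / u x ^ (1/q) + ((E a) ^ (1/p)).toReal := hxa
    _ < ε/2 + ε/2 := by
        apply add_lt_add_of_lt_of_le hx1
        exact hCa
    _ = ε := by ring
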